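/- Let a, b > 0 be real numbers, let k ≥ 2 be an integer, let 1 ≤ j ≤ k−1 and ε ∈ {+1,−1}. Set R = √(a⁴(k−2j)² + a²b²(2k + 4j(k−j)) + b⁴), ν = a²(k−2j)² + b²((4j+2)k − 4j²), α = [2(k−2j)²a² + (2k + 4j(k−j))b² − ε·2(k−2j)·R] / (4(k−j+1)b²), β = (−a²(k−2j) + b² + ε·R)/(ab), γ = k−j, and μ = ν + 2b⁴/a² + ε·2(b²/a²)·R. Then the following three scalar identities hold: (1) α·((k−2j)²a² + 4j(k−j+1)b²) + 2j·β·(b³/a) = α·μ; (2) 4(b³/a)·(α·(k−j+1) + γ·(j+1)) + β·(ν + 4b⁴/a²) = β·μ; (3) γ·((k−2j)²a² + 4(j+1)(k−j)b²) + 2(k−j)·β·(b³/a) = γ·μ. -/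

import Mathlib

set_option maxHeartbeats 1000000 in
private lemma eigenvector_aux (a b c d R ε : ℝ) (ha : 0 < a) (hb : 0 < b)
    (hcd : 1 ≤ c - d)
    (hR2 : R^2 = a^4*(c - 2*d)^2 + a^2*b^2*(2*c + 4*d*(c - d)) + b^4)
    (hε2 : ε^2 = 1) :
    let ν : ℝ := a^2*(c - 2*d)^2 + b^2*((4*d + 2)*c - 4*d^2)
    let α : ℝ := (2*(c - 2*d)^2*a^2 + (2*c + 4*d*(c - d))*b^2
      - ε*2*(c - 2*d)*R) / (4*(c - d + 1)*b^2)
    let β : ℝ := (-a^2*(c - 2*d) + b^2 + ε*R) / (a*b)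
    let γ : ℝ := c - d
    let μ : ℝ := ν + 2*b^4/a^2 + ε*2*(b^2/a^2)*R
    α*((c - 2*d)^2*a^2 + 4*d*(c - d + 1)*b^2) + 2*d*β*(b^3/a) = α*μ
    ∧ 4*(b^3/a)*(α*(c - d + 1) + γ*(d + 1)) + β*(ν + 4*b^4/a^2) = β*μ
    ∧ γ*((c - 2*d)^2*a^2 + 4*(d + 1)*(c - d)*b^2) + 2*(c - d)*β*(b^3/a) = γ*μ := by
  intro ν α β γ μ
  have ha' : a ≠ 0 := ha.ne'
  have hb' : b ≠ 0 := hb.ne'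
  have hcd' : c - d + 1 ≠ 0 := by nlinarith
  refine ⟨?_, ?_, ?_⟩
  · simp only [ν, α, β, γ, μ]
    field_simp
    linear_combination ((4)*b^2*c + (-8)*b^2*d) * hR2 + ((4)*b^2*c*R^2 + (-8)*b^2*d*R^2) * hε2
  · simp only [ν, α, β, γ, μ]
    field_simp
    linear_combination ((-2)*b^2) * hR2 + ((-2)*b^2*R^2) * hε2
  · simp only [ν, α, β, γ, μ]
    field_simp
    ring

/-- the three scalar identities verifying that `(α, β, γ)` is an eigenvector
of the Hodge-Laplacian block with eigenvalue `μ`. -/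
theorem eigenvector_coefficient_identities (a b : ℝ) (ha : 0 < a) (hb : 0 < b)
    (k j : ℕ) (hk : 2 ≤ k) (hj1 : 1 ≤ j) (hj2 : j ≤ k - 1)
    (ε : ℝ) (hε : ε = 1 ∨ ε = -1) :
    let R : ℝ := Real.sqrt (a^4*((k:ℝ) - 2*(j:ℝ))^2
      + a^2*b^2*(2*(k:ℝ) + 4*(j:ℝ)*((k:ℝ) - (j:ℝ))) + b^4)
    let ν : ℝ := a^2*((k:ℝ) - 2*(j:ℝ))^2 + b^2*((4*(j:ℝ) + 2)*(k:ℝ) - 4*(j:ℝ)^2)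
    let α : ℝ := (2*((k:ℝ) - 2*(j:ℝ))^2*a^2 + (2*(k:ℝ) + 4*(j:ℝ)*((k:ℝ) - (j:ℝ)))*b^2
      - ε*2*((k:ℝ) - 2*(j:ℝ))*R) / (4*((k:ℝ) - (j:ℝ) + 1)*b^2)
    let β : ℝ := (-a^2*((k:ℝ) - 2*(j:ℝ)) + b^2 + ε*R) / (a*b)
    let γ : ℝ := (k:ℝ) - (j:ℝ)
    let μ : ℝ := ν + 2*b^4/a^2 + ε*2*(b^2/a^2)*R
    α*(((k:ℝ) - 2*(j:ℝ))^2*a^2 + 4*(j:ℝ)*((k:ℝ) - (j:ℝ) + 1)*b^2) + 2*(j:ℝ)*β*(b^3/a) = α*μ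
    ∧ 4*(b^3/a)*(α*((k:ℝ) - (j:ℝ) + 1) + γ*((j:ℝ) + 1)) + β*(ν + 4*b^4/a^2) = β*μ
    ∧ γ*(((k:ℝ) - 2*(j:ℝ))^2*a^2 + 4*((j:ℝ) + 1)*((k:ℝ) - (j:ℝ))*b^2)
        + 2*((k:ℝ) - (j:ℝ))*β*(b^3/a) = γ*μ := by
  intro R ν α β γ μ
  have hjk : j + 1 ≤ k := by omega
  have hcd : 1 ≤ (k:ℝ) - (j:ℝ) := by
    have : ((j:ℝ) + 1) ≤ (k:ℝ) := by exact_mod_cast hjk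
    linarith
  have hd1 : 1 ≤ (j:ℝ) := by exact_mod_cast hj1
  have hrad : 0 ≤ a^4*((k:ℝ) - 2*(j:ℝ))^2
      + a^2*b^2*(2*(k:ℝ) + 4*(j:ℝ)*((k:ℝ) - (j:ℝ))) + b^4 := by
    have h1 : 0 ≤ 2*(k:ℝ) + 4*(j:ℝ)*((k:ℝ) - (j:ℝ)) := by nlinarith
    nlinarith [sq_nonneg (a^2*((k:ℝ) - 2*(j:ℝ))), sq_nonneg (b^2),
      mul_nonneg (mul_nonneg (sq_nonneg a) (sq_nonneg b)) h1]
  have hR2 : R^2 = a^4*((k:ℝ) - 2*(j:ℝ))^2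
      + a^2*b^2*(2*(k:ℝ) + 4*(j:ℝ)*((k:ℝ) - (j:ℝ))) + b^4 := Real.sq_sqrt hrad
  have hε2 : ε^2 = 1 := by rcases hε with h | h <;> rw [h] <;> norm_num
  exact eigenvector_aux a b (k:ℝ) (j:ℝ) R ε ha hb hcd hR2 hε2
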